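/- Let p be a prime, k a field with char k ≠ p containing a primitive p-th root of unity, H a finite p-group, and (ρ_i : H → GL(V_i))_{1≤i≤n} a family of irreducible representations of H over k with central characters χ_i. If the restrictions {χ_i|_{Ω₁(Z(H))} : 1 ≤ i ≤ n} span the character group of Ω₁(Z(H)), then ⊕_i ρ_i is a faithful representation of H. -/

import Mathlib

/-- Characters separate points in an elementary abelian `p`-group
(when `k` contains a primitive `p`-th root of unity). -/
lemma exists_char_ne_one (p : ℕ) (hp : p.Prime) {k : Type} [Field k] {ζ : k}
    (hζ : IsPrimitiveRoot ζ p) (A : Type) [CommGroup A] (hA : ∀ a : A, a ^ p = 1)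
    {z : A} (hz : z ≠ 1) : ∃ φ : A →* kˣ, φ z ≠ 1 := by
  haveI : Fact p.Prime := ⟨hp⟩
  haveI : NeZero p := ⟨hp.ne_zero⟩
  have hmod : ∀ x : Additive A, p • x = 0 := fun x =>
    Additive.toMul.injective (by rw [toMul_nsmul, toMul_zero]; exact hA _)
  letI : Module (ZMod p) (Additive A) := AddCommGroup.zmodModule (n := p) hmod
  -- a linear functional not vanishing on `z`
  have hz' : (Additive.ofMul z : Additive A) ≠ 0 := hz
  have hne : ¬ ∀ f : Module.Dual (ZMod p) (Additive A), f (Additive.ofMul z) = 0 := by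
    rw [Module.forall_dual_apply_eq_zero_iff]; exact hz'
  obtain ⟨f, hf⟩ := not_forall.mp hne
  -- `ζ` as a unit
  have hζp : ζ ^ p = 1 := hζ.pow_eq_one
  have hu : IsUnit ζ := hζ.isUnit hp.ne_zero
  set ζu : kˣ := hu.unit with hζu
  have hζuval : (ζu : k) = ζ := hu.unit_spec
  have hζup : ζu ^ p = 1 := by
    ext; push_cast [hζuval]; exact hζp
  -- the character
  refine ⟨{ toFun := fun a => ζu ^ (f (Additive.ofMul a)).val,
            map_one' := ?_, map_mul' := ?_ }, ?_⟩
  · show ζu ^ (f (Additive.ofMul (1 : A))).val = 1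
    rw [ofMul_one, map_zero, ZMod.val_zero, pow_zero]
  · intro a b
    show ζu ^ (f (Additive.ofMul (a * b))).val = ζu ^ _ * ζu ^ _
    rw [ofMul_mul, map_add, ZMod.val_add, ← pow_eq_pow_mod _ hζup, pow_add]
  · intro hcon
    have h2 : ζu ^ (f (Additive.ofMul z)).val = 1 := hcon
    have h3 : ζ ^ (f (Additive.ofMul z)).val = 1 := by
      have h2' := congrArg (Units.val) h2
      push_cast [hζuval] at h2'
      simpa using h2'
    have h4 : p ∣ (f (Additive.ofMul z)).val :=
      (IsPrimitiveRoot.pow_eq_one_iff_dvd hζ _).mp h3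
    have h6 : (f (Additive.ofMul z)).val = 0 :=
      Nat.eq_zero_of_dvd_of_lt h4 (ZMod.val_lt _) |>.symm ▸ rfl
    exact hf ((ZMod.val_eq_zero _).mp h6)

/-- `ρ.asModule` is a type synonym for `V`, so inherits its `AddCommGroup` structure. -/
instance asModuleAddCommGroup {k G V : Type} [CommSemiring k] [Monoid G] [AddCommGroup V]
    [Module k V] (ρ : Representation k G V) : AddCommGroup ρ.asModule :=
  inferInstanceAs (AddCommGroup V)

open scoped IsMulCommutative in
/-- The socle `Ω₁(Z(H)) = {z ∈ Z(H) : z^p = 1}`, as a subgroup of the center. -/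
def socle (H : Type) [Group H] (p : ℕ) : Subgroup (Subgroup.center H) :=
  MonoidHom.ker (powMonoidHom p : Subgroup.center H →* Subgroup.center H)

/-- Meyer–Reichstein: let `p` be a prime, `k` a field of characteristic `≠ p` containing a
primitive `p`-th root of unity, `H` a finite `p`-group, and `(ρ_i)` a family of irreducible
representations of `H` over `k` with central characters `χ_i`.  If the restrictions of the
`χ_i` to `Ω₁(Z(H))` generate its character group, then `⊕ρ_i` is faithful, i.e. the only
element of `H` acting trivially in every `ρ_i` is the identity. -/
theorem meyer_reichstein_faithful (p : ℕ) (hp : p.Prime)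
    (k : Type) [Field k] (hchar : ringChar k ≠ p) (ζ : k) (hζ : IsPrimitiveRoot ζ p)
    (H : Type) [Group H] [Finite H] (hH : IsPGroup p H)
    (n : ℕ) (V : Fin n → Type) [∀ i, AddCommGroup (V i)] [∀ i, Module k (V i)]
    (ρ : ∀ i, Representation k H (V i))
    (hirr : ∀ i, IsSimpleModule (MonoidAlgebra k H) (ρ i).asModule)
    (χ : Fin n → (Subgroup.center H →* kˣ))
    (hcentral : ∀ i (z : Subgroup.center H),
      ρ i (z : H) = (χ i z : k) • (LinearMap.id : V i →ₗ[k] V i))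
    (hspan : Subgroup.closure
        (Set.range fun i => (χ i).comp (socle H p).subtype) = (⊤ : Subgroup (socle H p →* kˣ))) :
    Function.Injective (fun h : H => fun i => ρ i h) := by
  haveI : Fact p.Prime := ⟨hp⟩
  -- Reduce to triviality of the common kernel.
  suffices key : ∀ h : H, (∀ i, ρ i h = 1) → h = 1 by
    intro a b hab
    have hab' : ∀ i, ρ i a = ρ i b := fun i => congrFun hab i
    have : a * b⁻¹ = 1 := by
      apply key
      intro i
      calc ρ i (a * b⁻¹) = ρ i a * ρ i b⁻¹ := map_mul _ _ _
        _ = ρ i b * ρ i b⁻¹ := by rw [hab' i]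
        _ = ρ i (b * b⁻¹) := (map_mul _ _ _).symm
        _ = 1 := by rw [mul_inv_cancel, map_one]
    exact mul_inv_eq_one.mp this
  intro h0 hh0
  by_contra hne
  -- The common kernel as a normal subgroup.
  set N : Subgroup H :=
    { carrier := {h : H | ∀ i, ρ i h = 1}
      one_mem' := fun i => map_one _
      mul_mem' := fun {a b} ha hb i => by rw [map_mul, ha i, hb i, one_mul]
      inv_mem' := fun {a} ha i => by
        have : ρ i a⁻¹ * ρ i a = 1 := by rw [← map_mul, inv_mul_cancel, map_one]
        rw [ha i, mul_one] at this
        exact this } with hN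
  haveI hNnormal : N.Normal := by
    constructor
    intro a ha g i
    have : ρ i (g * a * g⁻¹) = ρ i g * ρ i a * ρ i g⁻¹ := by rw [map_mul, map_mul]
    rw [this, ha i, mul_one, ← map_mul, mul_inv_cancel, map_one]
  have hh0N : h0 ∈ N := hh0
  haveI : Nontrivial N := ⟨⟨⟨h0, hh0N⟩, 1, by simp [hne]⟩⟩
  have hNp : IsPGroup p N := hH.to_subgroup N
  obtain ⟨m0, hm0, hcard⟩ := hNp.nontrivial_iff_card.mp inferInstance
  have hpdvd : p ∣ Nat.card N := hcard ▸ dvd_pow_self p hm0.ne'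
  -- A nontrivial element of `N` in the center of `H`.
  have h1fix : (1 : N) ∈ MulAction.fixedPoints (ConjAct H) N := by
    intro g
    ext
    rw [ConjAct.Subgroup.val_conj_smul]
    simp
  obtain ⟨b, hbfix, hb1⟩ :=
    (hH.of_equiv ConjAct.toConjAct).exists_fixed_point_of_prime_dvd_card_of_fixed_point
      (α := N) hpdvd h1fix
  have hbcenter : (b : H) ∈ Subgroup.center H := by
    rw [Subgroup.mem_center_iff]
    intro g
    have := hbfix (ConjAct.toConjAct g)
    have hval : g * (b : H) * g⁻¹ = (b : H) := by
      have := congrArg (Subtype.val) this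
      rw [ConjAct.Subgroup.val_conj_smul] at this
      simpa [ConjAct.toConjAct_smul] using this
    calc g * (b : H) = (g * b * g⁻¹) * g := by group
      _ = (b : H) * g := by rw [hval]
  have hbne : (b : H) ≠ 1 := by
    intro hcon
    exact hb1 (Subtype.ext hcon.symm)
  -- Replace `b` by a power of order exactly `p`.
  obtain ⟨nb, hnb⟩ := hH (b : H)
  obtain ⟨m, hmle, hm⟩ := (Nat.dvd_prime_pow hp).mp (orderOf_dvd_of_pow_eq_one hnb)
  have hm1 : 1 ≤ m := by
    rcases Nat.eq_zero_or_pos m with h | h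
    · exfalso
      rw [h, pow_zero, orderOf_eq_one_iff] at hm
      exact hbne hm
    · exact h
  set c : H := (b : H) ^ (p ^ (m - 1)) with hc
  have hcp : c ^ p = 1 := by
    rw [hc, ← pow_mul, ← pow_succ, Nat.sub_add_cancel hm1, ← hm, pow_orderOf_eq_one]
  have hcne : c ≠ 1 := by
    intro hcon
    have : orderOf (b : H) ∣ p ^ (m - 1) := orderOf_dvd_of_pow_eq_one hcon
    rw [hm] at this
    have hle := (Nat.pow_dvd_pow_iff_le_right hp.one_lt).mp this
    omega
  have hccenter : c ∈ Subgroup.center H := Subgroup.pow_mem _ hbcenter _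
  have hcN : c ∈ N := Subgroup.pow_mem _ (b.2) _
  -- Package as an element of the socle.
  set zc : Subgroup.center H := ⟨c, hccenter⟩ with hzc
  have hzcsocle : zc ∈ socle H p := by
    unfold socle
    rw [MonoidHom.mem_ker]
    ext
    exact hcp
  set z : socle H p := ⟨zc, hzcsocle⟩ with hz
  have hzne : z ≠ 1 := by
    intro hcon
    apply hcne
    have := congrArg (fun x : socle H p => ((x : Subgroup.center H) : H)) hcon
    exact this
  -- Every central character kills `z`.
  have hχz : ∀ i, χ i zc = 1 := by
    intro i
    haveI := hirr i
    haveI hnt : Nontrivial ((ρ i).asModule) :=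
      IsSimpleModule.nontrivial (MonoidAlgebra k H) ((ρ i).asModule)
    haveI : Nontrivial (V i) := hnt
    obtain ⟨v, hv⟩ := exists_ne (0 : V i)
    have h1 : ρ i (zc : H) = 1 := hcN i
    have h2 := hcentral i zc
    rw [h1] at h2
    have h3 : (1 : V i →ₗ[k] V i) v = ((χ i zc : k) • (LinearMap.id : V i →ₗ[k] V i)) v := by
      rw [h2]
    simp only [Module.End.one_apply, LinearMap.smul_apply, LinearMap.id_apply] at h3
    have h4 : ((χ i zc : k) - 1) • v = 0 := by
      rw [sub_smul, one_smul, ← h3, sub_self]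
    rcases smul_eq_zero.mp h4 with h | h
    · ext
      rw [sub_eq_zero] at h
      simpa using h
    · exact absurd h hv
  -- Hence every character of the socle kills `z`.
  have hker : ∀ φ : socle H p →* kˣ, φ z = 1 := by
    intro φ
    have hle : Subgroup.closure (Set.range fun i => (χ i).comp (socle H p).subtype) ≤
        MonoidHom.ker (MonoidHom.eval z : (socle H p →* kˣ) →* kˣ) := by
      rw [Subgroup.closure_le]
      rintro ψ ⟨i, rfl⟩
      show ((χ i).comp (socle H p).subtype) z = 1
      simpa using hχz i
    rw [hspan] at hle
    exact hle (Subgroup.mem_top φ)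
  -- But characters separate points of the socle: contradiction.
  open scoped IsMulCommutative in
  have hA : ∀ a : socle H p, a ^ p = 1 := by
    intro a
    have ha : powMonoidHom p (a : Subgroup.center H) = 1 := MonoidHom.mem_ker.mp a.2
    rw [powMonoidHom_apply] at ha
    refine Subtype.ext ?_
    rw [SubmonoidClass.coe_pow, OneMemClass.coe_one]
    exact ha
  open scoped IsMulCommutative in
  obtain ⟨φ, hφ⟩ := exists_char_ne_one p hp hζ (socle H p) hA hzne
  exact hφ (hker φ)
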